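/- Define stacked kinetic cylinders: for $Q = Q_r(z_0)$ with $z_0=(t_0,x_0,v_0)$ and integer $m\ge 1$, let $\bar Q^m = \{(t,x,v): 0 < t-t_0 < mr^2,\ |x - x_0 - (t-t_0)v_0| < (m+2)r^3,\ |v-v_0| < r\}$. Then for any countable family $\{Q_j\}$ of kinetic cylinders, $|\bigcup_j \bar Q_j^m| \ge \frac{m}{m+1}|\bigcup_j Q_j|$. -/

import Mathlib

open MeasureTheory
open scoped ENNReal

/-- A point of the kinetic phase space `ℝ × ℝᵈ × ℝᵈ` (time, position, velocity). -/
abbrev KPt (d : ℕ) := ℝ × EuclideanSpace ℝ (Fin d) × EuclideanSpace ℝ (Fin d)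

/-- The (slanted) kinetic cylinder `Q_r(z₀)` of radius `r` centered at `z₀`. -/
def kSlant (d : ℕ) (r : ℝ) (z₀ : KPt d) : Set (KPt d) :=
  {z | -r ^ 2 < z.1 - z₀.1 ∧ z.1 - z₀.1 ≤ 0 ∧
    ‖z.2.1 - z₀.2.1 - (z.1 - z₀.1) • z₀.2.2‖ < r ^ 3 ∧ ‖z.2.2 - z₀.2.2‖ < r}

/-- The stacked kinetic cylinder `Q̄_r^m(z₀)`. -/
def kStack (d : ℕ) (m : ℕ) (r : ℝ) (z₀ : KPt d) : Set (KPt d) :=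
  {z | 0 < z.1 - z₀.1 ∧ z.1 - z₀.1 < (m : ℝ) * r ^ 2 ∧
    ‖z.2.1 - z₀.2.1 - (z.1 - z₀.1) • z₀.2.2‖ < ((m : ℝ) + 2) * r ^ 3 ∧
    ‖z.2.2 - z₀.2.2‖ < r}

open Set

section OneD

lemma stacked_aux {ι : Type*} (m : ℕ) (s : Finset ι) (a l : ι → ℝ) (hl : ∀ j ∈ s, 0 < l j) :
    (m : ℝ≥0∞) * volume ((⋃ j ∈ s, Ioc (a j - l j) (a j)) \ (⋃ j ∈ s, Ioo (a j) (a j + m * l j)))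
      ≤ volume (⋃ j ∈ s, Ioo (a j) (a j + m * l j)) := by
  classical
  induction s using Finset.strongInduction with
  | _ s ih =>
    rcases s.eq_empty_or_nonempty with rfl | hs
    · simp
    obtain ⟨j0, hj0s, hj0max⟩ := s.exists_max_image a hs
    have hl0 : 0 < l j0 := hl j0 hj0s
    have hss : s.erase j0 ⊂ s := Finset.erase_ssubset hj0s
    have hl' : ∀ j ∈ s.erase j0, 0 < l j := fun j hj => hl j (Finset.mem_of_mem_erase hj)
    have IH := ih (s.erase j0) hss hl'
    set s' := s.erase j0
    set A' := ⋃ j ∈ s', Ioc (a j - l j) (a j) with hA'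
    set B' := ⋃ j ∈ s', Ioo (a j) (a j + (m : ℝ) * l j) with hB'
    have hBmeas : MeasurableSet B' := s'.measurableSet_biUnion (fun j _ => measurableSet_Ioo)
    have hA : (⋃ j ∈ s, Ioc (a j - l j) (a j)) = Ioc (a j0 - l j0) (a j0) ∪ A' := by
      rw [← Finset.insert_erase hj0s, Finset.set_biUnion_insert]
    have hB : (⋃ j ∈ s, Ioo (a j) (a j + (m : ℝ) * l j))
        = Ioo (a j0) (a j0 + (m : ℝ) * l j0) ∪ B' := by
      rw [← Finset.insert_erase hj0s, Finset.set_biUnion_insert]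
    rw [hA, hB]
    set S0 := Ioo (a j0) (a j0 + (m : ℝ) * l j0) with hS0
    -- key estimate
    have key : (m : ℝ≥0∞) * volume (Ioc (a j0 - l j0) (a j0) \ (A' ∪ (S0 ∪ B')))
        ≤ volume (S0 \ B') := by
      have hcast : ∀ x : ℝ, (m : ℝ≥0∞) * ENNReal.ofReal x = ENNReal.ofReal ((m : ℝ) * x) := by
        intro x
        rw [ENNReal.ofReal_mul (by positivity), ENNReal.ofReal_natCast]
      by_cases hD : ∀ k ∈ s', a k + (m : ℝ) * l k ≤ a j0
      · -- no stack from s' reaches past a j0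
        have hdisj : Disjoint S0 B' := by
          rw [Set.disjoint_left]
          intro x hxS hxB
          simp only [hB', Set.mem_iUnion, exists_prop] at hxB
          obtain ⟨k, hk, hxk⟩ := hxB
          have := hD k hk
          have h1 : a j0 < x := hxS.1
          have h2 : x < a k + (m : ℝ) * l k := hxk.2
          linarith
        have : S0 \ B' = S0 := hdisj.sdiff_eq_left
        rw [this, hS0, Real.volume_Ioo]
        calc (m : ℝ≥0∞) * volume (Ioc (a j0 - l j0) (a j0) \ (A' ∪ (S0 ∪ B')))
            ≤ (m : ℝ≥0∞) * volume (Ioc (a j0 - l j0) (a j0)) :=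
              mul_le_mul_right (measure_mono Set.diff_subset) _
          _ = ENNReal.ofReal ((m : ℝ) * (a j0 - (a j0 - l j0))) := by rw [Real.volume_Ioc, hcast]
          _ ≤ ENNReal.ofReal (a j0 + (m : ℝ) * l j0 - a j0) := by
              apply ENNReal.ofReal_le_ofReal
              have : (m : ℝ) * (a j0 - (a j0 - l j0)) = a j0 + (m : ℝ) * l j0 - a j0 := by ring
              linarith
      · push_neg at hD
        obtain ⟨k1, hk1, hk1gt⟩ := hD
        obtain ⟨k, hk, hkmax⟩ := s'.exists_max_image (fun k => a k + (m : ℝ) * l k) ⟨k1, hk1⟩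
        have hDgt : a j0 < a k + (m : ℝ) * l k := lt_of_lt_of_le hk1gt (hkmax k1 hk1)
        have hak : a k ≤ a j0 := hj0max k (Finset.mem_of_mem_erase hk)
        have hlk : 0 < l k := hl' k hk
        have incl1 : Ioc (a j0 - l j0) (a j0) \ (A' ∪ (S0 ∪ B'))
            ⊆ Ioc (a j0 - l j0) (a k - l k) := by
          rintro x ⟨hx, hxn⟩
          refine ⟨hx.1, ?_⟩
          by_contra hgt
          push_neg at hgt
          have hnA : x ∉ Ioc (a k - l k) (a k) := fun hmem => hxn (Or.inl
            (Set.mem_biUnion hk hmem))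
          have hnB : x ∉ Ioo (a k) (a k + (m : ℝ) * l k) := fun hmem => hxn (Or.inr (Or.inr
            (Set.mem_biUnion hk hmem)))
          have hxk : a k < x := by
            by_contra hle; push_neg at hle; exact hnA ⟨hgt, hle⟩
          have : ¬ (x < a k + (m : ℝ) * l k) := fun hlt => hnB ⟨hxk, hlt⟩
          push_neg at this
          have := hx.2
          linarith
        have incl2 : Ico (a k + (m : ℝ) * l k) (a j0 + (m : ℝ) * l j0) ⊆ S0 \ B' := by
          rintro x ⟨hx1, hx2⟩
          refine ⟨⟨by linarith, hx2⟩, ?_⟩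
          intro hxB
          simp only [hB', Set.mem_iUnion, exists_prop] at hxB
          obtain ⟨k', hk', hxk'⟩ := hxB
          have := hkmax k' hk'
          have := hxk'.2
          linarith
        calc (m : ℝ≥0∞) * volume (Ioc (a j0 - l j0) (a j0) \ (A' ∪ (S0 ∪ B')))
            ≤ (m : ℝ≥0∞) * volume (Ioc (a j0 - l j0) (a k - l k)) :=
              mul_le_mul_right (measure_mono incl1) _
          _ = ENNReal.ofReal ((m : ℝ) * ((a k - l k) - (a j0 - l j0))) := by
              rw [Real.volume_Ioc, hcast]
          _ ≤ ENNReal.ofReal ((a j0 + (m : ℝ) * l j0) - (a k + (m : ℝ) * l k)) := by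
              apply ENNReal.ofReal_le_ofReal
              nlinarith [mul_nonneg (Nat.cast_nonneg (α := ℝ) m) (sub_nonneg.mpr hak)]
          _ = volume (Ico (a k + (m : ℝ) * l k) (a j0 + (m : ℝ) * l j0)) := by
              rw [Real.volume_Ico]
          _ ≤ volume (S0 \ B') := measure_mono incl2
    have hsplit : (Ioc (a j0 - l j0) (a j0) ∪ A') \ (S0 ∪ B')
        ⊆ (A' \ B') ∪ (Ioc (a j0 - l j0) (a j0) \ (A' ∪ (S0 ∪ B'))) := by
      rintro x ⟨hx1 | hx1, hx2⟩
      · by_cases hxA : x ∈ A'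
        · exact Or.inl ⟨hxA, fun h => hx2 (Or.inr h)⟩
        · exact Or.inr ⟨hx1, fun h => h.elim hxA hx2⟩
      · exact Or.inl ⟨hx1, fun h => hx2 (Or.inr h)⟩
    have hvolB : volume (S0 ∪ B') = volume (S0 \ B') + volume B' := by
      rw [← Set.diff_union_self, measure_union disjoint_sdiff_self_left hBmeas]
    calc (m : ℝ≥0∞) * volume ((Ioc (a j0 - l j0) (a j0) ∪ A') \ (S0 ∪ B'))
        ≤ (m : ℝ≥0∞) * (volume (A' \ B')
            + volume (Ioc (a j0 - l j0) (a j0) \ (A' ∪ (S0 ∪ B')))) := by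
          gcongr
          exact le_trans (measure_mono hsplit) (measure_union_le _ _)
      _ = (m : ℝ≥0∞) * volume (A' \ B')
            + (m : ℝ≥0∞) * volume (Ioc (a j0 - l j0) (a j0) \ (A' ∪ (S0 ∪ B'))) := by
          rw [mul_add]
      _ ≤ volume B' + volume (S0 \ B') := add_le_add IH key
      _ = volume (S0 ∪ B') := by rw [hvolB, add_comm]

lemma stacked_intervals {ι : Type*} (m : ℕ) (s : Finset ι) (a l : ι → ℝ)
    (hl : ∀ j ∈ s, 0 < l j) :
    (m : ℝ≥0∞) / ((m : ℝ≥0∞) + 1) * volume (⋃ j ∈ s, Ioc (a j - l j) (a j))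
      ≤ volume (⋃ j ∈ s, Ioo (a j) (a j + (m : ℝ) * l j)) := by
  set A := ⋃ j ∈ s, Ioc (a j - l j) (a j) with hA
  set B := ⋃ j ∈ s, Ioo (a j) (a j + (m : ℝ) * l j) with hB
  have h1 : volume A ≤ volume B + volume (A \ B) := by
    calc volume A ≤ volume (B ∪ (A \ B)) := measure_mono (fun x hx => by
          by_cases hxB : x ∈ B
          exacts [Or.inl hxB, Or.inr ⟨hx, hxB⟩])
      _ ≤ _ := measure_union_le _ _
  have h2 := stacked_aux m s a l hl
  have h3 : (m : ℝ≥0∞) * volume A ≤ ((m : ℝ≥0∞) + 1) * volume B := by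
    calc (m : ℝ≥0∞) * volume A ≤ (m : ℝ≥0∞) * (volume B + volume (A \ B)) :=
          mul_le_mul_right h1 _
      _ = (m : ℝ≥0∞) * volume B + (m : ℝ≥0∞) * volume (A \ B) := mul_add _ _ _
      _ ≤ (m : ℝ≥0∞) * volume B + volume B := add_le_add_right h2 _
      _ = ((m : ℝ≥0∞) + 1) * volume B := by ring
  have hne0 : ((m : ℝ≥0∞) + 1) ≠ 0 := by simp
  have hnetop : ((m : ℝ≥0∞) + 1) ≠ ⊤ := by
    simp [ENNReal.add_ne_top]
  calc (m : ℝ≥0∞) / ((m : ℝ≥0∞) + 1) * volume A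
      = ((m : ℝ≥0∞) * volume A) / ((m : ℝ≥0∞) + 1) := by
        rw [div_eq_mul_inv, div_eq_mul_inv, mul_right_comm]
    _ ≤ (((m : ℝ≥0∞) + 1) * volume B) / ((m : ℝ≥0∞) + 1) :=
        ENNReal.div_le_div_right h3 _
    _ = ((m : ℝ≥0∞) + 1) * (volume B / ((m : ℝ≥0∞) + 1)) := mul_div_assoc _ _ _
    _ = volume B := ENNReal.mul_div_cancel hne0 hnetop

end OneD

section Shear

variable {d : ℕ}

lemma shear_fiber (d : ℕ) (t : ℝ) : MeasurePreserving
    (fun w : EuclideanSpace ℝ (Fin d) × EuclideanSpace ℝ (Fin d) => (w.1 - t • w.2, w.2))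
    volume volume := by
  have mid : MeasurePreserving
      (fun q : EuclideanSpace ℝ (Fin d) × EuclideanSpace ℝ (Fin d) => (q.1, q.2 - t • q.1))
      volume volume := by
    rw [Measure.volume_eq_prod _ _]
    exact (MeasurePreserving.id volume).skew_product
      (g := fun v x => x - t • v)
      (measurable_snd.sub (measurable_fst.const_smul t))
      (Filter.Eventually.of_forall (fun v => by
        show Measure.map (fun x : EuclideanSpace ℝ (Fin d) => x - t • v) volume = volume
        have h : (fun x : EuclideanSpace ℝ (Fin d) => x - t • v) = fun x => x + -(t • v) := by
          funext x; rw [sub_eq_add_neg]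
        rw [h]
        exact map_add_right_eq_self volume _))
  have hswap : MeasurePreserving
      (Prod.swap : EuclideanSpace ℝ (Fin d) × EuclideanSpace ℝ (Fin d) →
        EuclideanSpace ℝ (Fin d) × EuclideanSpace ℝ (Fin d)) volume volume := by
    rw [Measure.volume_eq_prod _ _]
    exact Measure.measurePreserving_swap
  have heq : (fun w : EuclideanSpace ℝ (Fin d) × EuclideanSpace ℝ (Fin d) =>
      (w.1 - t • w.2, w.2))
      = Prod.swap ∘ (fun q : EuclideanSpace ℝ (Fin d) × EuclideanSpace ℝ (Fin d) =>
        (q.1, q.2 - t • q.1)) ∘ Prod.swap := rfl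
  rw [heq]
  exact (hswap.comp mid).comp hswap

lemma shear_mp (d : ℕ) : MeasurePreserving
    (fun p : KPt d => (p.1, p.2.1 - p.1 • p.2.2, p.2.2)) volume volume := by
  rw [show (volume : Measure (KPt d))
      = (volume : Measure ℝ).prod
        (volume : Measure (EuclideanSpace ℝ (Fin d) × EuclideanSpace ℝ (Fin d)))
    from Measure.volume_eq_prod _ _]
  exact (MeasurePreserving.id volume).skew_product
    (g := fun (t : ℝ) (w : EuclideanSpace ℝ (Fin d) × EuclideanSpace ℝ (Fin d)) => (w.1 - t • w.2, w.2))
    (((measurable_fst.comp measurable_snd).sub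
      (measurable_fst.smul (measurable_snd.comp measurable_snd))).prodMk
      (measurable_snd.comp measurable_snd))
    (Filter.Eventually.of_forall (fun t => (shear_fiber d t).map_eq))

end Shear

section FiniteCase

lemma finite_case (d m : ℕ) {ι : Type*} (s : Finset ι) (r : ι → ℝ) (z : ι → KPt d)
    (hr : ∀ j, 0 < r j) :
    ((m : ℝ≥0∞) / ((m : ℝ≥0∞) + 1)) * volume (⋃ j ∈ s, kSlant d (r j) (z j))
      ≤ volume (⋃ j ∈ s, kStack d m (r j) (z j)) := by
  classical
  set C : ι → Set (EuclideanSpace ℝ (Fin d) × EuclideanSpace ℝ (Fin d)) := fun j =>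
    {w | ‖w.1 - (z j).2.1 + (z j).1 • w.2‖ < 2 * r j ^ 3 ∧ ‖w.2 - (z j).2.2‖ < r j} with hC
  have hCmeas : ∀ j, MeasurableSet (C j) := by
    intro j
    apply IsOpen.measurableSet
    exact ((isOpen_lt (((continuous_fst.sub continuous_const).add
      ((continuous_const (y := (z j).1)).smul continuous_snd)).norm) continuous_const).inter
      (isOpen_lt ((continuous_snd.sub continuous_const).norm) continuous_const))
  set W := ⋃ j ∈ s, (Ioc ((z j).1 - r j ^ 2) ((z j).1)) ×ˢ C j with hW
  set Wm := ⋃ j ∈ s, (Ioo ((z j).1) ((z j).1 + (m : ℝ) * r j ^ 2)) ×ˢ C j with hWm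
  have hWmeas : MeasurableSet W :=
    s.measurableSet_biUnion (fun j _ => measurableSet_Ioc.prod (hCmeas j))
  have hWmmeas : MeasurableSet Wm :=
    s.measurableSet_biUnion (fun j _ => measurableSet_Ioo.prod (hCmeas j))
  have hΨ := shear_mp d
  -- inclusion 1
  have h1 : (⋃ j ∈ s, kSlant d (r j) (z j))
      ⊆ (fun p : KPt d => (p.1, p.2.1 - p.1 • p.2.2, p.2.2)) ⁻¹' W := by
    intro p hp
    rw [Set.mem_iUnion₂] at hp
    obtain ⟨j, hj, hpj⟩ := hp
    obtain ⟨hs1, hs2, hs3, hs4⟩ := hpj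
    rw [Set.mem_preimage, hW, Set.mem_iUnion₂]
    refine ⟨j, hj, ⟨⟨by linarith, by linarith⟩, ?_, hs4⟩⟩
    have hid : (p.2.1 - p.1 • p.2.2) - (z j).2.1 + (z j).1 • p.2.2
        = (p.2.1 - (z j).2.1 - (p.1 - (z j).1) • (z j).2.2)
          - (p.1 - (z j).1) • (p.2.2 - (z j).2.2) := by
      module
    show ‖(p.2.1 - p.1 • p.2.2) - (z j).2.1 + (z j).1 • p.2.2‖ < 2 * r j ^ 3
    rw [hid]
    have hE : ‖(p.1 - (z j).1) • (p.2.2 - (z j).2.2)‖ < r j ^ 3 := by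
      rw [norm_smul, Real.norm_eq_abs]
      have habs : |p.1 - (z j).1| ≤ r j ^ 2 := abs_le.mpr ⟨by linarith, by linarith⟩
      nlinarith [norm_nonneg (p.2.2 - (z j).2.2), hr j, pow_pos (hr j) 2,
        mul_le_mul_of_nonneg_right habs (norm_nonneg (p.2.2 - (z j).2.2)),
        mul_lt_mul_of_pos_left hs4 (pow_pos (hr j) 2)]
    calc ‖(p.2.1 - (z j).2.1 - (p.1 - (z j).1) • (z j).2.2)
          - (p.1 - (z j).1) • (p.2.2 - (z j).2.2)‖
        ≤ ‖p.2.1 - (z j).2.1 - (p.1 - (z j).1) • (z j).2.2‖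
          + ‖(p.1 - (z j).1) • (p.2.2 - (z j).2.2)‖ := norm_sub_le _ _
      _ < 2 * r j ^ 3 := by linarith
  -- inclusion 2
  have h2 : (fun p : KPt d => (p.1, p.2.1 - p.1 • p.2.2, p.2.2)) ⁻¹' Wm
      ⊆ ⋃ j ∈ s, kStack d m (r j) (z j) := by
    intro p hp
    rw [Set.mem_preimage, hWm, Set.mem_iUnion₂] at hp
    obtain ⟨j, hj, ⟨⟨ht1, ht2⟩, hc1, hc2⟩⟩ := hp
    rw [Set.mem_iUnion₂]
    refine ⟨j, hj, by linarith, by linarith, ?_, hc2⟩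
    have hid : p.2.1 - (z j).2.1 - (p.1 - (z j).1) • (z j).2.2
        = ((p.2.1 - p.1 • p.2.2) - (z j).2.1 + (z j).1 • p.2.2)
          + (p.1 - (z j).1) • (p.2.2 - (z j).2.2) := by
      module
    rw [hid]
    have hE : ‖(p.1 - (z j).1) • (p.2.2 - (z j).2.2)‖ ≤ (m : ℝ) * r j ^ 3 := by
      rw [norm_smul, Real.norm_eq_abs]
      have habs : |p.1 - (z j).1| ≤ (m : ℝ) * r j ^ 2 := abs_le.mpr ⟨by linarith, by linarith⟩
      have hnv : ‖p.2.2 - (z j).2.2‖ ≤ r j := le_of_lt hc2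
      nlinarith [norm_nonneg (p.2.2 - (z j).2.2), hr j, abs_nonneg (p.1 - (z j).1),
        mul_le_mul_of_nonneg_right habs (norm_nonneg (p.2.2 - (z j).2.2)),
        mul_le_mul_of_nonneg_left hnv (mul_nonneg (Nat.cast_nonneg (α := ℝ) m)
          (le_of_lt (pow_pos (hr j) 2)))]
    calc ‖((p.2.1 - p.1 • p.2.2) - (z j).2.1 + (z j).1 • p.2.2)
          + (p.1 - (z j).1) • (p.2.2 - (z j).2.2)‖
        ≤ ‖(p.2.1 - p.1 • p.2.2) - (z j).2.1 + (z j).1 • p.2.2‖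
          + ‖(p.1 - (z j).1) • (p.2.2 - (z j).2.2)‖ := norm_add_le _ _
      _ < ((m : ℝ) + 2) * r j ^ 3 := by nlinarith [hc1, hE]
  -- middle Fubini estimate
  have hcne : (m : ℝ≥0∞) / ((m : ℝ≥0∞) + 1) ≠ ⊤ := by
    exact (ENNReal.div_lt_top (by simp) (by simp)).ne
  have mid : ((m : ℝ≥0∞) / ((m : ℝ≥0∞) + 1)) * volume W ≤ volume Wm := by
    have hprod : (volume : Measure (KPt d))
        = (volume : Measure ℝ).prod
          (volume : Measure (EuclideanSpace ℝ (Fin d) × EuclideanSpace ℝ (Fin d))) :=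
      Measure.volume_eq_prod _ _
    have hsliceW : ∀ w : EuclideanSpace ℝ (Fin d) × EuclideanSpace ℝ (Fin d),
        (fun t : ℝ => (t, w)) ⁻¹' W
        = ⋃ j ∈ s.filter (fun j => w ∈ C j), Ioc ((z j).1 - r j ^ 2) ((z j).1) := by
      intro w
      ext t
      simp only [hW, Set.mem_preimage, Set.mem_iUnion, Set.mem_prod, Finset.mem_filter,
        exists_prop, Set.mem_iUnion]
      constructor
      · rintro ⟨j, hj, ht, hc⟩; exact ⟨j, ⟨hj, hc⟩, ht⟩
      · rintro ⟨j, ⟨hj, hc⟩, ht⟩; exact ⟨j, hj, ht, hc⟩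
    have hsliceWm : ∀ w : EuclideanSpace ℝ (Fin d) × EuclideanSpace ℝ (Fin d),
        (fun t : ℝ => (t, w)) ⁻¹' Wm
        = ⋃ j ∈ s.filter (fun j => w ∈ C j),
            Ioo ((z j).1) ((z j).1 + (m : ℝ) * r j ^ 2) := by
      intro w
      ext t
      simp only [hWm, Set.mem_preimage, Set.mem_iUnion, Set.mem_prod, Finset.mem_filter,
        exists_prop, Set.mem_iUnion]
      constructor
      · rintro ⟨j, hj, ht, hc⟩; exact ⟨j, ⟨hj, hc⟩, ht⟩
      · rintro ⟨j, ⟨hj, hc⟩, ht⟩; exact ⟨j, hj, ht, hc⟩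
    rw [hprod, Measure.prod_apply_symm hWmeas, Measure.prod_apply_symm hWmmeas]
    rw [← lintegral_const_mul' _ _ hcne]
    apply lintegral_mono
    intro w
    show (m : ℝ≥0∞) / ((m : ℝ≥0∞) + 1) * volume ((fun t : ℝ => (t, w)) ⁻¹' W)
      ≤ volume ((fun t : ℝ => (t, w)) ⁻¹' Wm)
    rw [hsliceW w, hsliceWm w]
    exact stacked_intervals m (s.filter (fun j => w ∈ C j))
      (fun j => (z j).1) (fun j => r j ^ 2)
      (fun j _ => pow_pos (hr j) 2)
  calc ((m : ℝ≥0∞) / ((m : ℝ≥0∞) + 1)) * volume (⋃ j ∈ s, kSlant d (r j) (z j))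
      ≤ ((m : ℝ≥0∞) / ((m : ℝ≥0∞) + 1))
        * volume ((fun p : KPt d => (p.1, p.2.1 - p.1 • p.2.2, p.2.2)) ⁻¹' W) :=
        mul_le_mul_right (measure_mono h1) _
    _ = ((m : ℝ≥0∞) / ((m : ℝ≥0∞) + 1)) * volume W := by
        rw [hΨ.measure_preimage hWmeas.nullMeasurableSet]
    _ ≤ volume Wm := mid
    _ = volume ((fun p : KPt d => (p.1, p.2.1 - p.1 • p.2.2, p.2.2)) ⁻¹' Wm) :=
        (hΨ.measure_preimage hWmmeas.nullMeasurableSet).symm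
    _ ≤ volume (⋃ j ∈ s, kStack d m (r j) (z j)) := measure_mono h2

end FiniteCase

/-- Overlapping stacked kinetic cylinders: the union of the stacked cylinders has measure
at least `m/(m+1)` times the measure of the union of the original cylinders. -/
theorem stmt19 (d m : ℕ) (hm : 1 ≤ m) (ι : Type*) [Countable ι]
    (r : ι → ℝ) (z : ι → KPt d) (hr : ∀ j, 0 < r j) :
    ((m : ℝ≥0∞) / (m + 1)) * volume (⋃ j, kSlant d (r j) (z j)) ≤
      volume (⋃ j, kStack d m (r j) (z j)) := by
  classical
  have key : ∀ t : Finset ι, ((m : ℝ≥0∞) / ((m : ℝ≥0∞) + 1))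
      * volume (⋃ j ∈ t, kSlant d (r j) (z j))
      ≤ volume (⋃ j, kStack d m (r j) (z j)) := fun t =>
    le_trans (finite_case d m t r z hr)
      (measure_mono (Set.iUnion₂_subset fun j _ =>
        Set.subset_iUnion (fun k => kStack d m (r k) (z k)) j))
  have hmono : Monotone (fun t : Finset ι => ⋃ j ∈ t, kSlant d (r j) (z j)) :=
    fun t t' htt' => Set.biUnion_subset_biUnion_left htt'
  have hdir : Directed (· ⊆ ·) (fun t : Finset ι => ⋃ j ∈ t, kSlant d (r j) (z j)) :=
    hmono.directed_le
  rw [Set.iUnion_eq_iUnion_finset (fun j => kSlant d (r j) (z j)),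
    hdir.measure_iUnion, ENNReal.mul_iSup]
  exact iSup_le key
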